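/- Let l ≥ 1 be an integer, a ∈ ℝ, and let J be the l×l Jordan cell matrix with a on the diagonal and 1 on the superdiagonal. Then for every t ∈ (0, e^{−1}] ∪ [e, +∞): t^a ≤ ‖t^J‖ ≤ √l · e · t^a · |log t|^{l−1}, where ‖·‖ is the operator norm induced by the Euclidean norm; moreover the lower bound t^a ≤ ‖t^J‖ holds for every t > 0. -/

import Mathlib

open MeasureTheory ProbabilityTheory Filter Matrix Real

noncomputable section

/-- `t ^ A := exp((log t) • A)` for a real square matrix `A` and `t > 0`. -/
def matPow {d : ℕ} (t : ℝ) (A : Matrix (Fin d) (Fin d) ℝ) : Matrix (Fin d) (Fin d) ℝ :=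
  NormedSpace.exp (Real.log t • A)

/-- The `l × l` Jordan cell matrix with `a` on the diagonal and `1` on the superdiagonal. -/
def jordanCell (l : ℕ) (a : ℝ) : Matrix (Fin l) (Fin l) ℝ :=
  Matrix.of fun i j => if (i : ℕ) = (j : ℕ) then a else if (j : ℕ) = (i : ℕ) + 1 then 1 else 0

/-- The operator norm of a matrix induced by the Euclidean norm on `ℝ^l`. -/
def eucOpNorm {l : ℕ} (A : Matrix (Fin l) (Fin l) ℝ) : ℝ :=
  ‖LinearMap.toContinuousLinearMap (Matrix.toEuclideanLin A)‖

namespace JordanAux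

lemma nilp_pow_apply (l k : ℕ) (i j : Fin l) :
    ((jordanCell l 0) ^ k) i j = if (j : ℕ) = (i : ℕ) + k then 1 else 0 := by
  induction k generalizing j with
  | zero =>
    simp only [pow_zero, Matrix.one_apply, add_zero]
    by_cases h : i = j
    · simp [h]
    · rw [if_neg h, if_neg (fun hc => h (Fin.ext hc.symm))]
  | succ k ih =>
    rw [pow_succ, Matrix.mul_apply]
    by_cases h : (i : ℕ) + k < l
    · rw [Finset.sum_eq_single (⟨(i : ℕ) + k, h⟩ : Fin l)]
      · rw [ih, if_pos rfl, one_mul]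
        show (if ((i:ℕ)+k) = (j:ℕ) then (0:ℝ) else if (j:ℕ) = (i:ℕ)+k+1 then 1 else 0)
          = if (j:ℕ) = (i:ℕ) + (k+1) then 1 else 0
        split_ifs <;> first | rfl | (exfalso; omega)
      · intro b _ hb
        rw [ih, if_neg (fun hc => hb (Fin.ext hc)), zero_mul]
      · intro hm; exact absurd (Finset.mem_univ _) hm
    · rw [Finset.sum_eq_zero, if_neg (by have := j.isLt; omega)]
      intro b _
      rw [ih, if_neg (by have := b.isLt; omega), zero_mul]

lemma nilp_pow_self (l : ℕ) : (jordanCell l 0) ^ l = 0 := by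
  ext i j
  rw [nilp_pow_apply, if_neg (by have := j.isLt; omega)]
  rfl

lemma jordanCell_decomp (l : ℕ) (a : ℝ) :
    jordanCell l a = a • (1 : Matrix (Fin l) (Fin l) ℝ) + jordanCell l 0 := by
  ext i j
  simp only [jordanCell, Matrix.of_apply, Matrix.add_apply, Matrix.smul_apply,
    Matrix.one_apply, smul_eq_mul, Fin.ext_iff]
  split_ifs <;> ring

lemma exp_smul_one (l : ℕ) (c : ℝ) :
    NormedSpace.exp (c • (1 : Matrix (Fin l) (Fin l) ℝ)) =
      Real.exp c • (1 : Matrix (Fin l) (Fin l) ℝ) := by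
  letI : SeminormedRing (Matrix (Fin l) (Fin l) ℝ) := Matrix.linftyOpSemiNormedRing
  letI : NormedRing (Matrix (Fin l) (Fin l) ℝ) := Matrix.linftyOpNormedRing
  letI : NormedAlgebra ℝ (Matrix (Fin l) (Fin l) ℝ) := Matrix.linftyOpNormedAlgebra
  rw [← Algebra.algebraMap_eq_smul_one]
  erw [← NormedSpace.algebraMap_exp_comm]
  rw [Algebra.algebraMap_eq_smul_one, Real.exp_eq_exp_ℝ]

lemma exp_nilp_smul (l : ℕ) (s : ℝ) :
    NormedSpace.exp (s • jordanCell l 0) =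
      ∑ k ∈ Finset.range l, (s ^ k * ((Nat.factorial k : ℝ))⁻¹) • (jordanCell l 0) ^ k := by
  rw [NormedSpace.exp_eq_tsum ℝ]
  have h0 : ∀ k ∉ Finset.range l,
      ((Nat.factorial k : ℝ))⁻¹ • (s • jordanCell l 0) ^ k = 0 := by
    intro k hk
    rw [Finset.mem_range, not_lt] at hk
    obtain ⟨m, rfl⟩ := Nat.exists_eq_add_of_le hk
    have hz : jordanCell l 0 ^ (l + m) = 0 := by
      rw [pow_add, nilp_pow_self, zero_mul]
    rw [smul_pow, hz, smul_zero, smul_zero]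
  beta_reduce
  rw [tsum_eq_sum h0]
  refine Finset.sum_congr rfl fun k _ => ?_
  rw [smul_pow, smul_smul, mul_comm]

lemma matPow_jordanCell (l : ℕ) (a t : ℝ) :
    matPow t (jordanCell l a) = Real.exp (Real.log t * a) •
      ∑ k ∈ Finset.range l,
        ((Real.log t) ^ k * ((Nat.factorial k : ℝ))⁻¹) • (jordanCell l 0) ^ k := by
  rw [matPow, jordanCell_decomp, smul_add, smul_smul,
    Matrix.exp_add_of_commute _ _ ((Commute.one_left _).smul_left _ |>.smul_right _),
    exp_smul_one, exp_nilp_smul, smul_mul_assoc, one_mul]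

open scoped Matrix.Norms.L2Operator

lemma eucOpNorm_eq (l : ℕ) (A : Matrix (Fin l) (Fin l) ℝ) : eucOpNorm A = ‖A‖ := rfl

lemma abs_apply_le_l2norm (l : ℕ) (A : Matrix (Fin l) (Fin l) ℝ) (i j : Fin l) :
    |A i j| ≤ ‖A‖ := by
  have h := Matrix.l2_opNorm_mulVec A (EuclideanSpace.single j (1 : ℝ))
  rw [EuclideanSpace.norm_single, norm_one, mul_one] at h
  refine le_trans ?_ h
  set y : EuclideanSpace ℝ (Fin l) :=
    (EuclideanSpace.equiv (Fin l) ℝ).symm (A *ᵥ (EuclideanSpace.single j (1 : ℝ))) with hy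
  have hyi : y i = A i j := by
    show (A *ᵥ Pi.single j (1 : ℝ)) i = A i j
    rw [Matrix.mulVec_single]
    exact mul_one _
  calc |A i j| = |(inner ℝ (EuclideanSpace.single i (1 : ℝ)) y : ℝ)| := by
        rw [EuclideanSpace.inner_single_left, hyi]; simp
    _ ≤ ‖EuclideanSpace.single i (1 : ℝ)‖ * ‖y‖ := abs_real_inner_le_norm _ _
    _ = ‖y‖ := by rw [EuclideanSpace.norm_single, norm_one, one_mul]

lemma l2norm_nilp_pow_le (l k : ℕ) : ‖(jordanCell l 0) ^ k‖ ≤ 1 := by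
  rw [Matrix.l2_opNorm_def]
  refine ContinuousLinearMap.opNorm_le_bound _ zero_le_one fun x => ?_
  rw [one_mul]
  have happ : (LinearEquiv.trans (Matrix.toEuclideanLin (𝕜 := ℝ) (m := Fin l) (n := Fin l))
      LinearMap.toContinuousLinearMap) ((jordanCell l 0) ^ k) x =
      (WithLp.equiv 2 (Fin l → ℝ)).symm
        (((jordanCell l 0) ^ k) *ᵥ (WithLp.equiv 2 (Fin l → ℝ)) x) := rfl
  rw [happ, EuclideanSpace.norm_eq, EuclideanSpace.norm_eq]
  apply Real.sqrt_le_sqrt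
  have hmv : ∀ i : Fin l,
      ‖((WithLp.equiv 2 (Fin l → ℝ)).symm
        (((jordanCell l 0) ^ k) *ᵥ (WithLp.equiv 2 (Fin l → ℝ)) x)) i‖ ^ 2 =
      ∑ j : Fin l, (if (j : ℕ) = (i : ℕ) + k then ‖x j‖ ^ 2 else 0) := by
    intro i
    have : ((WithLp.equiv 2 (Fin l → ℝ)).symm
        (((jordanCell l 0) ^ k) *ᵥ (WithLp.equiv 2 (Fin l → ℝ)) x)) i =
        ∑ j : Fin l, (if (j : ℕ) = (i : ℕ) + k then 1 else 0) * x j := by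
      show (((jordanCell l 0) ^ k) *ᵥ (fun j => x j)) i = _
      rw [Matrix.mulVec, dotProduct]
      exact Finset.sum_congr rfl fun j _ => by rw [nilp_pow_apply]
    rw [this]
    by_cases h : (i : ℕ) + k < l
    · rw [Finset.sum_eq_single (⟨(i : ℕ) + k, h⟩ : Fin l),
        Finset.sum_eq_single (⟨(i : ℕ) + k, h⟩ : Fin l)]
      · rw [if_pos rfl, if_pos rfl, one_mul]
      · intro b _ hb
        rw [if_neg (fun hc => hb (Fin.ext hc))]
      · intro hm; exact absurd (Finset.mem_univ _) hm
      · intro b _ hb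
        rw [if_neg (fun hc => hb (Fin.ext hc)), zero_mul]
      · intro hm; exact absurd (Finset.mem_univ _) hm
    · rw [Finset.sum_eq_zero, Finset.sum_eq_zero]
      · simp
      · intro b _
        rw [if_neg (by have := b.isLt; omega)]
      · intro b _
        rw [if_neg (by have := b.isLt; omega), zero_mul]
  calc ∑ i : Fin l, ‖((WithLp.equiv 2 (Fin l → ℝ)).symm
        (((jordanCell l 0) ^ k) *ᵥ (WithLp.equiv 2 (Fin l → ℝ)) x)) i‖ ^ 2
      = ∑ i : Fin l, ∑ j : Fin l, (if (j : ℕ) = (i : ℕ) + k then ‖x j‖ ^ 2 else 0) :=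
        Finset.sum_congr rfl fun i _ => hmv i
    _ = ∑ j : Fin l, ∑ i : Fin l, (if (j : ℕ) = (i : ℕ) + k then ‖x j‖ ^ 2 else 0) :=
        Finset.sum_comm
    _ ≤ ∑ j : Fin l, ‖x j‖ ^ 2 := by
        refine Finset.sum_le_sum fun j _ => ?_
        by_cases hk : k ≤ (j : ℕ)
        · have hlt : (j : ℕ) - k < l := lt_of_le_of_lt (Nat.sub_le _ _) j.isLt
          rw [Finset.sum_eq_single (⟨(j : ℕ) - k, hlt⟩ : Fin l)]
          · rw [if_pos (by simp; omega)]
          · intro b _ hb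
            refine if_neg (fun hc => hb (Fin.ext ?_))
            simp; omega
          · intro hm; exact absurd (Finset.mem_univ _) hm
        · rw [Finset.sum_eq_zero]
          · positivity
          · intro b _
            exact if_neg (by omega)

lemma E_diag_one (l : ℕ) (hl : 1 ≤ l) (s : ℝ) :
    (∑ k ∈ Finset.range l, (s ^ k * ((Nat.factorial k : ℝ))⁻¹) • (jordanCell l 0) ^ k)
      ⟨0, hl⟩ ⟨0, hl⟩ = 1 := by
  rw [Matrix.sum_apply]
  rw [Finset.sum_eq_single 0]
  · simp [nilp_pow_apply]
  · intro k hk hk0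
    rw [Matrix.smul_apply, nilp_pow_apply, if_neg (by omega), smul_zero]
  · intro h
    exact absurd (Finset.mem_range.mpr hl) h

end JordanAux

open JordanAux in
/-- For the Jordan cell `J` of size `l ≥ 1` with real eigenvalue `a`:
`t^a ≤ ‖t^J‖` for every `t > 0`, and for `t ∈ (0, e⁻¹] ∪ [e, ∞)` moreover
`‖t^J‖ ≤ √l · e · t^a · |log t|^(l-1)`, `‖·‖` being the operator norm induced by
the Euclidean norm. -/
theorem eucOpNorm_matPow_jordanCell (l : ℕ) (hl : 1 ≤ l) (a : ℝ) (t : ℝ) (ht : 0 < t) :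
    t ^ a ≤ eucOpNorm (matPow t (jordanCell l a)) ∧
    (t ≤ Real.exp (-1) ∨ Real.exp 1 ≤ t →
      eucOpNorm (matPow t (jordanCell l a)) ≤
        Real.sqrt l * Real.exp 1 * t ^ a * |Real.log t| ^ (l - 1)) := by
  open scoped Matrix.Norms.L2Operator in
  set s := Real.log t with hs
  set E := ∑ k ∈ Finset.range l, (s ^ k * ((Nat.factorial k : ℝ))⁻¹) • (jordanCell l 0) ^ k
    with hE
  have hta : (0:ℝ) < t ^ a := Real.rpow_pos_of_pos ht a
  have hnorm : eucOpNorm (matPow t (jordanCell l a)) = t ^ a * ‖E‖ := by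
    rw [matPow_jordanCell, eucOpNorm_eq, norm_smul, Real.norm_eq_abs,
      abs_of_pos (Real.exp_pos _), ← Real.rpow_def_of_pos ht]
  constructor
  · rw [hnorm]
    have h1 : (1:ℝ) ≤ ‖E‖ := by
      have h2 := abs_apply_le_l2norm l E ⟨0, hl⟩ ⟨0, hl⟩
      rw [hE, E_diag_one l hl s, ← hE] at h2
      simpa using h2
    calc t ^ a = t ^ a * 1 := (mul_one _).symm
      _ ≤ t ^ a * ‖E‖ := by gcongr
  · intro ht'
    have h1 : 1 ≤ |s| := by
      rcases ht' with h | h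
      · have := Real.log_le_log ht h
        rw [Real.log_exp] at this
        rw [abs_of_nonpos (by linarith)]
        linarith
      · have := Real.log_le_log (Real.exp_pos 1) h
        rw [Real.log_exp] at this
        rw [abs_of_nonneg (by linarith)]
        linarith
    have hEle : ‖E‖ ≤ Real.exp 1 * |s| ^ (l - 1) := by
      have step1 : ‖E‖ ≤ ∑ k ∈ Finset.range l, |s| ^ k / (Nat.factorial k : ℝ) := by
        refine (norm_sum_le _ _).trans (Finset.sum_le_sum fun k _ => ?_)
        rw [norm_smul]
        calc ‖s ^ k * ((Nat.factorial k : ℝ))⁻¹‖ * ‖(jordanCell l 0) ^ k‖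
            ≤ ‖s ^ k * ((Nat.factorial k : ℝ))⁻¹‖ * 1 := by
              gcongr
              exact l2norm_nilp_pow_le l k
          _ = |s| ^ k / (Nat.factorial k : ℝ) := by
              rw [mul_one, Real.norm_eq_abs, abs_mul, abs_pow, abs_inv,
                Nat.abs_cast, div_eq_mul_inv]
      refine step1.trans ?_
      have step2 : ∑ k ∈ Finset.range l, |s| ^ k / (Nat.factorial k : ℝ)
          ≤ ∑ k ∈ Finset.range l, |s| ^ (l - 1) / (Nat.factorial k : ℝ) := by
        refine Finset.sum_le_sum fun k hk => ?_
        have hkl : k ≤ l - 1 := by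
          have := Finset.mem_range.mp hk; omega
        gcongr
      refine step2.trans ?_
      have step3 : ∑ k ∈ Finset.range l, |s| ^ (l - 1) / (Nat.factorial k : ℝ)
          = |s| ^ (l - 1) * ∑ k ∈ Finset.range l, 1 / (Nat.factorial k : ℝ) := by
        rw [Finset.mul_sum]
        exact Finset.sum_congr rfl fun k _ => by ring
      rw [step3]
      have hsum : ∑ k ∈ Finset.range l, 1 / (Nat.factorial k : ℝ) ≤ Real.exp 1 := by
        have := Real.sum_le_exp_of_nonneg (zero_le_one) l
        simpa using this
      calc |s| ^ (l - 1) * ∑ k ∈ Finset.range l, 1 / (Nat.factorial k : ℝ)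
          ≤ |s| ^ (l - 1) * Real.exp 1 := by
            gcongr
        _ = Real.exp 1 * |s| ^ (l - 1) := mul_comm _ _
    rw [hnorm]
    have hsqrt : (1:ℝ) ≤ Real.sqrt l := by
      rw [Real.one_le_sqrt]
      exact_mod_cast hl
    calc t ^ a * ‖E‖ ≤ t ^ a * (Real.exp 1 * |s| ^ (l - 1)) := by gcongr
      _ = 1 * (Real.exp 1 * t ^ a * |s| ^ (l - 1)) := by ring
      _ ≤ Real.sqrt l * (Real.exp 1 * t ^ a * |s| ^ (l - 1)) := by
          gcongr
      _ = Real.sqrt l * Real.exp 1 * t ^ a * |s| ^ (l - 1) := by ring
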